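/- Let R : ℝ^d → (0,∞) be a 1-Lipschitz function and γ a piecewise C¹ curve from x to y. Define a chain x₀ = x, x₁, …, x_N = y on γ inductively: given x_j, if the remaining part [x_j, y]_γ of the curve lies in the closed ball B(x_j; R(x_j)/2) set x_{j+1} = y and stop with N = j+1; otherwise let x_{j+1} be the first point of [x_j, y]_γ on the sphere ∂B(x_j; R(x_j)/2). Then the length N = N(γ) of this chain satisfies N(γ) ≤ 3·∫_γ |dz|/R(z) + 1. -/

import Mathlib

open MeasureTheory

/-- index of a curve.  Let `γ` be a (piecewise) C¹ curve on `[0,1]` from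
`x = γ 0` to `y = γ 1`, with derivative `γ'`, and let `x_j = γ (t j)` (for a monotone
partition `0 = t 0 ≤ … ≤ t N = 1`) be the chain constructed in the paper: for every
`j ≤ N - 2` the point `x_{j+1}` is the first point of the remaining curve on the sphere
`∂B(x_j; R(x_j)/2)` — in particular `‖x_{j+1} - x_j‖ = R(x_j)/2` and the piece of the
curve between `t j` and `t (j+1)` stays in the closed ball `B(x_j; R(x_j)/2)`.
Then `N ≤ 3 ∫_γ |dz|/R(z) + 1`. -/
theorem stmt_3 {d : ℕ} (R : EuclideanSpace ℝ (Fin d) → ℝ)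
    (hlip : LipschitzWith 1 R) (hpos : ∀ x, 0 < R x)
    (γ γ' : ℝ → EuclideanSpace ℝ (Fin d))
    (hγ : ∀ t ∈ Set.Icc (0:ℝ) 1, HasDerivAt γ (γ' t) t)
    (hγ' : ContinuousOn γ' (Set.Icc 0 1))
    (N : ℕ) (hN : 0 < N) (t : Fin (N + 1) → ℝ) (hmono : Monotone t)
    (ht0 : t 0 = 0) (htN : t (Fin.last N) = 1)
    (hstep : ∀ j : Fin N, (j : ℕ) + 1 ≤ N - 1 →
      ‖γ (t j.succ) - γ (t j.castSucc)‖ = R (γ (t j.castSucc)) / 2 ∧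
      ∀ s ∈ Set.Icc (t j.castSucc) (t j.succ),
        ‖γ s - γ (t j.castSucc)‖ ≤ R (γ (t j.castSucc)) / 2) :
    (N : ℝ) ≤ 3 * ∫ s in (0:ℝ)..1, ‖γ' s‖ / R (γ s) + 1 := by
  have hγc : ContinuousOn γ (Set.Icc 0 1) :=
    fun s hs => (hγ s hs).continuousAt.continuousWithinAt
  set f : ℝ → ℝ := fun s => ‖γ' s‖ / R (γ s) with hfdef
  have hfc : ContinuousOn f (Set.Icc 0 1) :=
    hγ'.norm.div (hlip.continuous.comp_continuousOn hγc) (fun s _ => (hpos _).ne')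
  have hf0 : ∀ s, 0 ≤ f s := fun s => div_nonneg (norm_nonneg _) (hpos _).le
  have hmem : ∀ j : Fin (N+1), t j ∈ Set.Icc (0:ℝ) 1 := fun j =>
    ⟨ht0 ▸ hmono (Fin.zero_le j), htN ▸ hmono (Fin.le_last j)⟩
  -- per-piece lower bound
  have key : ∀ j : Fin N, (j : ℕ) + 1 ≤ N - 1 →
      1/3 ≤ ∫ s in (t j.castSucc)..(t j.succ), f s := by
    intro j hj
    obtain ⟨hdist, hball⟩ := hstep j hj
    set a := t j.castSucc with ha
    set b := t j.succ with hb
    have hab : a ≤ b := hmono (Fin.castSucc_le_succ j)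
    have hsub : Set.Icc a b ⊆ Set.Icc 0 1 :=
      Set.Icc_subset_Icc (hmem _).1 (hmem _).2
    have hRa : 0 < R (γ a) := hpos _
    have hbound : ∀ s ∈ Set.Icc a b, R (γ s) ≤ 3/2 * R (γ a) := by
      intro s hs
      have h1 : dist (R (γ s)) (R (γ a)) ≤ dist (γ s) (γ a) := by
        simpa using hlip.dist_le_mul (γ s) (γ a)
      rw [Real.dist_eq, dist_eq_norm] at h1
      have h2 := hball s hs
      have h3 : R (γ s) - R (γ a) ≤ ‖γ s - γ a‖ := (le_abs_self _).trans h1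
      linarith
    have hγ'int : IntervalIntegrable γ' volume a b := by
      apply (hγ'.mono (by rw [Set.uIcc_of_le hab]; exact hsub)).intervalIntegrable
    have hftc : ∫ s in a..b, γ' s = γ b - γ a := by
      apply intervalIntegral.integral_eq_sub_of_hasDerivAt
      · intro s hs
        rw [Set.uIcc_of_le hab] at hs
        exact hγ s (hsub hs)
      · exact hγ'int
    have hlen : R (γ a) / 2 ≤ ∫ s in a..b, ‖γ' s‖ := by
      calc R (γ a) / 2 = ‖γ b - γ a‖ := hdist.symm
        _ = ‖∫ s in a..b, γ' s‖ := by rw [hftc]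
        _ ≤ ∫ s in a..b, ‖γ' s‖ := intervalIntegral.norm_integral_le_integral_norm hab
    have hc : (0:ℝ) < 2 / (3 * R (γ a)) := by positivity
    have hineq : ∀ s ∈ Set.Icc a b, 2 / (3 * R (γ a)) * ‖γ' s‖ ≤ f s := by
      intro s hs
      have hRs : 0 < R (γ s) := hpos _
      have hb' := hbound s hs
      have : ‖γ' s‖ / (3/2 * R (γ a)) ≤ ‖γ' s‖ / R (γ s) := by
        gcongr
      calc 2 / (3 * R (γ a)) * ‖γ' s‖ = ‖γ' s‖ / (3/2 * R (γ a)) := by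
            field_simp
        _ ≤ f s := this
    have hnormint : IntervalIntegrable (fun s => ‖γ' s‖) volume a b := hγ'int.norm
    have hfint : IntervalIntegrable f volume a b :=
      (hfc.mono hsub).intervalIntegrable_of_Icc hab
    have hmonoi : ∫ s in a..b, 2 / (3 * R (γ a)) * ‖γ' s‖ ≤ ∫ s in a..b, f s :=
      intervalIntegral.integral_mono_on hab (hnormint.const_mul _) hfint hineq
    rw [intervalIntegral.integral_const_mul] at hmonoi
    have : 2 / (3 * R (γ a)) * (R (γ a) / 2) ≤ 2 / (3 * R (γ a)) * ∫ s in a..b, ‖γ' s‖ := by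
      exact mul_le_mul_of_nonneg_left hlen hc.le
    have heq : 2 / (3 * R (γ a)) * (R (γ a) / 2) = 1/3 := by
      field_simp
    linarith
  -- chain of integrals
  set u : ℕ → ℝ := fun i => t ⟨min i N, Nat.lt_succ_of_le (min_le_right _ _)⟩ with hu
  have humono : ∀ i, u i ≤ u (i+1) := by
    intro i
    apply hmono
    simp only [Fin.mk_le_mk]
    omega
  have humem : ∀ i, u i ∈ Set.Icc (0:ℝ) 1 := fun i => hmem _
  have hint : ∀ k, k < N → IntervalIntegrable f volume (u k) (u (k+1)) := by
    intro k _
    exact (hfc.mono (Set.Icc_subset_Icc (humem _).1 (humem _).2)).intervalIntegrable_of_Icc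
      (humono k)
  have hsum : ∑ k ∈ Finset.range N, ∫ s in (u k)..(u (k+1)), f s = ∫ s in (u 0)..(u N), f s :=
    intervalIntegral.sum_integral_adjacent_intervals hint
  have hu0 : u 0 = 0 := by
    rw [hu]; simpa [Fin.ext_iff] using ht0
  have huN : u N = 1 := by
    rw [hu]
    convert htN using 2
    simp [Fin.ext_iff, Fin.last]
  rw [hu0, huN] at hsum
  -- each term nonneg, and 1/3 for k ≤ N-2
  have hterm_nonneg : ∀ k ∈ Finset.range N, (0:ℝ) ≤ ∫ s in (u k)..(u (k+1)), f s := by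
    intro k _
    apply intervalIntegral.integral_nonneg (humono k) (fun s _ => hf0 s)
  have hterm_key : ∀ k ∈ Finset.range (N-1), (1/3 : ℝ) ≤ ∫ s in (u k)..(u (k+1)), f s := by
    intro k hk
    rw [Finset.mem_range] at hk
    have hkN : k < N := by omega
    have h1 : u k = t (⟨k, hkN⟩ : Fin N).castSucc := by
      simp only [hu]
      congr 1
      apply Fin.ext
      simp only [Fin.coe_castSucc]
      omega
    have h2 : u (k+1) = t (⟨k, hkN⟩ : Fin N).succ := by
      simp only [hu]
      congr 1
      apply Fin.ext
      simp only [Fin.val_succ]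
      omega
    rw [h1, h2]
    exact key ⟨k, hkN⟩ (by simp; omega)
  have hsumlb : ((N:ℝ) - 1) * (1/3) ≤ ∑ k ∈ Finset.range N, ∫ s in (u k)..(u (k+1)), f s := by
    have h1 : ∑ k ∈ Finset.range (N-1), ∫ s in (u k)..(u (k+1)), f s ≤
        ∑ k ∈ Finset.range N, ∫ s in (u k)..(u (k+1)), f s := by
      apply Finset.sum_le_sum_of_subset_of_nonneg
      · apply Finset.range_subset_range.mpr; omega
      · intro k hk _; exact hterm_nonneg k hk
    have h2 : ((N-1 : ℕ):ℝ) * (1/3) ≤ ∑ k ∈ Finset.range (N-1), ∫ s in (u k)..(u (k+1)), f s := by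
      calc ((N-1 : ℕ):ℝ) * (1/3) = ∑ _k ∈ Finset.range (N-1), (1/3:ℝ) := by
            rw [Finset.sum_const, nsmul_eq_mul, Finset.card_range]
        _ ≤ _ := Finset.sum_le_sum hterm_key
    have h3 : ((N-1:ℕ):ℝ) = (N:ℝ) - 1 := by
      have : (1:ℕ) ≤ N := hN
      push_cast [Nat.cast_sub this]
      ring
    linarith [h1, h2, h3 ▸ h2]
  rw [hsum] at hsumlb
  have hfint01 : IntervalIntegrable f volume 0 1 := hfc.intervalIntegrable_of_Icc zero_le_one
  have hsplit : (∫ s in (0:ℝ)..1, (f s + 1)) = (∫ s in (0:ℝ)..1, f s) + 1 := by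
    rw [intervalIntegral.integral_add hfint01 intervalIntegrable_const]
    simp
  show (N:ℝ) ≤ 3 * ∫ s in (0:ℝ)..1, (f s + 1)
  rw [hsplit]
  linarith
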